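/- Let G be a finite connected simple graph of order n ≥ 2, not isomorphic to the complete graph K_n, such that β_p(G) = n−h and 2·τ(G) > n, and let W be its (unique) twin class of cardinality τ(G). Then n−2h ≤ τ(G) ≤ n−h−1 if and only if the subgraph of G induced by W is complete. -/

import Mathlib

open Classical SimpleGraph

noncomputable section

/-- The distance from a vertex to a set of vertices. -/
def setDist {V : Type*} (G : SimpleGraph V) (u : V) (S : Set V) : ℕ :=
  sInf ((G.dist u) '' S)

/-- A locating partition of a graph: a partition of the vertex set such that every
vertex is uniquely determined by its vector of distances to the parts. -/
def IsLocatingPartition {V : Type*} (G : SimpleGraph V) (P : Set (Set V)) : Prop :=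
  Setoid.IsPartition P ∧
    ∀ u v : V, (∀ S ∈ P, setDist G u S = setDist G v S) → u = v

/-- The partition dimension: the minimum cardinality of a locating partition. -/
def partitionDim {V : Type*} (G : SimpleGraph V) : ℕ :=
  sInf {k | ∃ P : Set (Set V), IsLocatingPartition G P ∧ P.ncard = k}

/-- Two vertices are twins if they have the same neighbors other than themselves. -/
def IsTwin {V : Type*} (G : SimpleGraph V) (u v : V) : Prop :=
  G.neighborSet u \ {v} = G.neighborSet v \ {u}

/-- The twin class of a vertex. -/
def twinClass {V : Type*} (G : SimpleGraph V) (u : V) : Set V :=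
  {v | IsTwin G u v}

/-- The twin number: the maximum cardinality of a twin class. -/
def twinNumber {V : Type*} (G : SimpleGraph V) : ℕ :=
  sSup {k | ∃ u : V, (twinClass G u).ncard = k}

namespace Aux

variable {V : Type*} {G : SimpleGraph V}

lemma isTwin_iff {u v : V} :
    IsTwin G u v ↔ ∀ z, z ≠ u → z ≠ v → (G.Adj u z ↔ G.Adj v z) := by
  constructor
  · intro h z hzu hzv
    have h1 : z ∈ G.neighborSet u \ {v} ↔ z ∈ G.neighborSet v \ {u} := by rw [h]
    simp only [Set.mem_diff, mem_neighborSet, Set.mem_singleton_iff] at h1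
    constructor
    · intro ha
      exact ((h1.mp ⟨ha, hzv⟩).1)
    · intro ha
      exact ((h1.mpr ⟨ha, hzu⟩).1)
  · intro h
    ext z
    simp only [Set.mem_diff, mem_neighborSet, Set.mem_singleton_iff]
    constructor
    · rintro ⟨ha, hzv⟩
      have hzu : z ≠ u := fun e => G.irrefl (e ▸ ha)
      exact ⟨(h z hzu hzv).mp ha, hzu⟩
    · rintro ⟨ha, hzu⟩
      have hzv : z ≠ v := fun e => G.irrefl (e ▸ ha)
      exact ⟨(h z hzu hzv).mpr ha, hzv⟩

lemma isTwin_refl (u : V) : IsTwin G u u := rfl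

lemma isTwin_symm {u v : V} (h : IsTwin G u v) : IsTwin G v u := by
  rw [isTwin_iff] at h ⊢
  intro z hzv hzu
  exact (h z hzu hzv).symm

lemma isTwin_trans {u v w : V} (huv : IsTwin G u v) (hvw : IsTwin G v w) :
    IsTwin G u w := by
  by_cases huw : u = w
  · exact huw ▸ isTwin_refl u
  by_cases huv' : u = v
  · exact huv' ▸ hvw
  by_cases hvw' : v = w
  · exact hvw' ▸ huv
  rw [isTwin_iff] at huv hvw ⊢
  intro z hzu hzw
  by_cases hzv : z = v
  · subst hzv
    -- goal : G.Adj u z ↔ G.Adj w z  with z = v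
    -- from huv with z := w : w ≠ u, w ≠ v : Adj u w ↔ Adj v w
    have h1 := huv w (fun e => huw e.symm) (fun e => hvw' e.symm)
    have h2 := hvw u (fun e => huv' e) (fun e => huw e)
    constructor
    · intro hh
      exact ((h1.mp (h2.mp hh.symm).symm)).symm
    · intro hh
      exact ((h2.mpr (h1.mpr hh.symm).symm)).symm
  · exact (huv z hzu hzv).trans (hvw z hzv hzw)

/-- twins see other vertices the same way -/
lemma isTwin_adj_iff {u v z : V} (h : IsTwin G u v) (hzu : z ≠ u) (hzv : z ≠ v) :
    (G.Adj z u ↔ G.Adj z v) := by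
  rw [isTwin_iff] at h
  constructor
  · intro ha; exact ((h z hzu hzv).mp ha.symm).symm
  · intro ha; exact ((h z hzu hzv).mpr ha.symm).symm

lemma dist_le_of_twin_aux (hG : G.Connected) {u v z : V} (h : IsTwin G u v)
    (hzu : z ≠ u) (hzv : z ≠ v) : G.dist v z ≤ G.dist u z := by
  obtain ⟨p, hp⟩ := (hG.preconnected u z).exists_walk_length_eq_dist
  cases p with
  | nil => exact absurd rfl hzu
  | cons ha q =>
    rename_i y
    rw [SimpleGraph.Walk.length_cons] at hp
    by_cases hyv : y = v
    · subst hyv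
      have := SimpleGraph.dist_le q
      omega
    · have hadj : G.Adj v y := by
        have := (isTwin_iff.mp h) y (fun e => G.irrefl (e ▸ ha)) hyv
        exact this.mp ha
      have := SimpleGraph.dist_le (SimpleGraph.Walk.cons hadj q)
      rw [SimpleGraph.Walk.length_cons] at this
      omega

/-- Twins are equidistant from any third vertex. -/
lemma dist_eq_of_twin (hG : G.Connected) {u v z : V} (h : IsTwin G u v)
    (hzu : z ≠ u) (hzv : z ≠ v) : G.dist u z = G.dist v z :=
  le_antisymm (dist_le_of_twin_aux hG (isTwin_symm h) hzv hzu)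
    (dist_le_of_twin_aux hG h hzu hzv)

lemma nat_sInf_pair (x y : ℕ) : sInf ({x, y} : Set ℕ) = min x y := by
  apply le_antisymm
  · rcases min_cases x y with ⟨h1, _⟩ | ⟨h1, _⟩
    · rw [h1]; exact Nat.sInf_le (by simp)
    · rw [h1]; exact Nat.sInf_le (by simp)
  · have : sInf ({x, y} : Set ℕ) ∈ ({x, y} : Set ℕ) := Nat.sInf_mem ⟨x, by simp⟩
    rcases this with h | h
    · rw [h]; exact min_le_left x y
    · rw [Set.mem_singleton_iff] at h; rw [h]; exact min_le_right x y

lemma setDist_le {u z : V} {S : Set V} (hz : z ∈ S) : setDist G u S ≤ G.dist u z :=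
  Nat.sInf_le ⟨z, hz, rfl⟩

lemma setDist_singleton (u z : V) : setDist G u {z} = G.dist u z := by
  simp [setDist]

lemma setDist_pair (u a b : V) : setDist G u {a, b} = min (G.dist u a) (G.dist u b) := by
  rw [setDist, Set.image_pair, nat_sInf_pair]

lemma setDist_eq_zero_of_mem {u : V} {S : Set V} (hu : u ∈ S) : setDist G u S = 0 := by
  have := setDist_le (G := G) (u := u) hu
  rw [SimpleGraph.dist_self] at this
  omega

lemma setDist_ne_zero (hG : G.Connected) {v : V} {S : Set V} (hS : S.Nonempty)
    (hv : v ∉ S) : setDist G v S ≠ 0 := by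
  intro h0
  have hmem : setDist G v S ∈ (G.dist v) '' S := Nat.sInf_mem (hS.image _)
  rw [h0] at hmem
  obtain ⟨z, hz, hdz⟩ := hmem
  have : v = z := (hG.dist_eq_zero_iff).mp hdz
  exact hv (this ▸ hz)

lemma setDist_eq_of_twin (hG : G.Connected) {u v : V} (h : IsTwin G u v)
    {S : Set V} (hu : u ∉ S) (hv : v ∉ S) : setDist G u S = setDist G v S := by
  unfold setDist
  congr 1
  apply Set.image_congr
  intro z hz
  exact dist_eq_of_twin hG h (fun e => hu (e ▸ hz)) (fun e => hv (e ▸ hz))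

lemma walk_boundary {W : Set V} {u x : V} (p : G.Walk u x) (h1 : u ∈ W) (h2 : x ∉ W) :
    ∃ a b, a ∈ W ∧ b ∉ W ∧ G.Adj a b := by
  induction p with
  | nil => exact absurd h1 h2
  | cons ha q ih =>
    rename_i c d e
    by_cases hy : d ∈ W
    · exact ih hy h2
    · exact ⟨c, d, h1, hy, ha⟩

/-- Master construction lemma: a partition into singletons and pairs given by an
involution, where each pair is resolved by some part. -/
lemma exists_locating_of_pairing [Fintype V] (hG : G.Connected)
    (σ : V → V) (hinv : ∀ v, σ (σ v) = v)
    (R : Set V)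
    (hfix : ∀ v, σ v = v → v ∈ R)
    (hswap : ∀ v, σ v ≠ v → (v ∈ R ↔ σ v ∉ R))
    (hwit : ∀ r ∈ R, σ r ≠ r →
      ∃ z ∈ R, min (G.dist r z) (G.dist r (σ z)) ≠ min (G.dist (σ r) z) (G.dist (σ r) (σ z))) :
    ∃ P, IsLocatingPartition G P ∧ P.ncard ≤ R.ncard := by
  classical
  -- representative of each vertex
  have hrepex : ∀ v : V, ∃ r ∈ R, v = r ∨ v = σ r := by
    intro v
    by_cases hv : v ∈ R
    · exact ⟨v, hv, Or.inl rfl⟩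
    · have hne : σ v ≠ v := fun e => hv (hfix v e)
      have hσv : σ v ∈ R := by
        by_contra hc
        exact hv ((hswap v hne).mpr hc)
      exact ⟨σ v, hσv, Or.inr (hinv v).symm⟩
  have huniq : ∀ {r r' : V}, r ∈ R → r' ∈ R → r' = r ∨ r' = σ r → r' = r := by
    intro r r' hr hr' hor
    rcases hor with h | h
    · exact h
    · by_cases hfr : σ r = r
      · rw [h, hfr]
      · exact absurd (h ▸ hr') ((hswap r hfr).mp hr)
  set f : V → Set V := fun r => {r, σ r} with hf
  refine ⟨f '' R, ⟨⟨?_, ?_⟩, ?_⟩, Set.ncard_image_le R.toFinite⟩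
  · rintro ⟨r, hr, he⟩
    have : r ∈ f r := by simp [hf]
    rw [he] at this
    exact this
  · intro a
    obtain ⟨r, hr, hor⟩ := hrepex a
    refine ⟨f r, ⟨⟨r, hr, rfl⟩, ?_⟩, ?_⟩
    · rcases hor with h | h
      · exact h ▸ Set.mem_insert _ _
      · rw [h]; exact Set.mem_insert_iff.mpr (Or.inr rfl)
    · rintro S ⟨⟨r', hr', rfl⟩, haS⟩
      have hor' : a = r' ∨ a = σ r' := by simpa [hf] using haS
      -- show f r' = f r; first r' = r
      have : r' = r := by
        rcases hor with h | h
        · rcases hor' with h' | h'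
          · exact huniq hr hr' (Or.inl (h'.symm.trans h))
          · exact (huniq hr' hr (Or.inr (h.symm.trans h'))).symm
        · rcases hor' with h' | h'
          · exact huniq hr hr' (Or.inr (h'.symm.trans h))
          · have h2 : σ r' = σ r := h'.symm.trans h
            have h3 := congrArg σ h2
            rw [hinv, hinv] at h3
            exact h3
      rw [this]
  · -- locating
    intro u v hsd
    by_contra hne
    obtain ⟨ru, hru, horu⟩ := hrepex u
    obtain ⟨rv, hrv, horv⟩ := hrepex v
    by_cases hreq : ru = rv
    · subst hreq
      -- u, v in the same pair part
      have hpair : σ ru ≠ ru := by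
        intro e
        rcases horu with h | h <;> rcases horv with h' | h' <;>
          simp_all
      obtain ⟨z, hz, hzne⟩ := hwit ru hru hpair
      have hz1 := hsd (f z) ⟨z, hz, rfl⟩
      rw [show f z = {z, σ z} from rfl, setDist_pair, setDist_pair] at hz1
      rcases horu with h | h <;> rcases horv with h' | h'
      · exact hne (h.trans h'.symm)
      · rw [h, h'] at hz1; exact hzne hz1
      · rw [h, h'] at hz1; exact hzne hz1.symm
      · exact hne (h.trans h'.symm)
    · -- different parts
      have hvnot : v ∉ f ru := by
        intro hv
        have hor' : v = ru ∨ v = σ ru := by simpa [hf] using hv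
        have : ru = rv := by
          rcases hor' with h | h
          · rcases horv with h' | h'
            · exact h.symm.trans h'
            · exact (huniq hrv hru (Or.inr (h.symm.trans h')))
          · rcases horv with h' | h'
            · exact (huniq hru hrv (Or.inr (h'.symm.trans h))).symm
            · have h2 : σ ru = σ rv := h.symm.trans h'
              have h3 := congrArg σ h2
              rw [hinv, hinv] at h3
              exact h3
        exact hreq this
      have h0 : setDist G u (f ru) = 0 := by
        apply setDist_eq_zero_of_mem
        rcases horu with h | h
        · exact h ▸ Set.mem_insert _ _
        · rw [h]; exact Set.mem_insert_iff.mpr (Or.inr rfl)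
      have h1 : setDist G v (f ru) ≠ 0 :=
        setDist_ne_zero hG ⟨ru, Set.mem_insert _ _⟩ hvnot
      rw [hsd (f ru) ⟨ru, hru, rfl⟩] at h0
      exact h1 h0

lemma partitionDim_le_of_pairing [Fintype V] (hG : G.Connected)
    (σ : V → V) (hinv : ∀ v, σ (σ v) = v)
    (R : Set V)
    (hfix : ∀ v, σ v = v → v ∈ R)
    (hswap : ∀ v, σ v ≠ v → (v ∈ R ↔ σ v ∉ R))
    (hwit : ∀ r ∈ R, σ r ≠ r →
      ∃ z ∈ R, min (G.dist r z) (G.dist r (σ z)) ≠ min (G.dist (σ r) z) (G.dist (σ r) (σ z))) :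
    partitionDim G ≤ R.ncard := by
  obtain ⟨P, hP, hle⟩ := exists_locating_of_pairing hG σ hinv R hfix hswap hwit
  exact le_trans (Nat.sInf_le ⟨P, hP, rfl⟩) hle

lemma locating_set_nonempty [Fintype V] (hG : G.Connected) :
    {k | ∃ P : Set (Set V), IsLocatingPartition G P ∧ P.ncard = k}.Nonempty := by
  obtain ⟨P, hP, _⟩ := exists_locating_of_pairing hG id (fun v => rfl) Set.univ
    (fun v _ => Set.mem_univ v) (fun v hv => absurd rfl hv)
    (fun r _ hr => absurd rfl hr)
  exact ⟨P.ncard, P, hP, rfl⟩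

lemma exists_min_locating [Fintype V] (hG : G.Connected) :
    ∃ P : Set (Set V), IsLocatingPartition G P ∧ P.ncard = partitionDim G :=
  Nat.sInf_mem (locating_set_nonempty hG)

/-- every locating partition puts the members of a twin class in pairwise distinct
parts, hence has at least that many parts -/
lemma partOf_injOn [Fintype V] (hG : G.Connected) (u0 : V)
    {P : Set (Set V)} (hP : IsLocatingPartition G P) :
    ∃ pt : V → Set V, (∀ a, pt a ∈ P ∧ a ∈ pt a) ∧
      (∀ a, ∀ S ∈ P, a ∈ S → S = pt a) ∧
      Set.InjOn pt (twinClass G u0) := by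
  classical
  have hpt : ∀ a : V, ∃ b, (b ∈ P ∧ a ∈ b) ∧ ∀ y, (y ∈ P ∧ a ∈ y) → y = b := by
    intro a
    obtain ⟨b, hb, hu⟩ := hP.1.2 a
    exact ⟨b, hb, hu⟩
  set pt : V → Set V := fun a => (hpt a).choose with hptdef
  have h1 : ∀ a, pt a ∈ P ∧ a ∈ pt a := fun a => (hpt a).choose_spec.1
  have h2 : ∀ a, ∀ S ∈ P, a ∈ S → S = pt a := fun a S hS haS =>
    (hpt a).choose_spec.2 S ⟨hS, haS⟩
  refine ⟨pt, h1, h2, ?_⟩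
  intro w hw w' hw' heq
  by_contra hne
  apply hne
  apply hP.2
  intro S hS
  have htwin : IsTwin G w w' := isTwin_trans (isTwin_symm hw) hw'
  by_cases hwS : w ∈ S
  · have hSw : S = pt w := h2 w S hS hwS
    have hw'S : w' ∈ S := by rw [hSw, heq]; exact (h1 w').2
    rw [setDist_eq_zero_of_mem hwS, setDist_eq_zero_of_mem hw'S]
  · have hw'S : w' ∉ S := by
      intro hmem
      have hSw' : S = pt w' := h2 w' S hS hmem
      apply hwS
      rw [hSw', ← heq]
      exact (h1 w).2
    exact setDist_eq_of_twin hG htwin hwS hw'S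

lemma tau_le_ncard [Fintype V] (hG : G.Connected) (u0 : V)
    {P : Set (Set V)} (hP : IsLocatingPartition G P) :
    (twinClass G u0).ncard ≤ P.ncard := by
  obtain ⟨pt, h1, _, hinj⟩ := partOf_injOn hG u0 hP
  exact Set.ncard_le_ncard_of_injOn pt (fun a _ => (h1 a).1) hinj (Set.toFinite P)

lemma tau_le_partitionDim [Fintype V] (hG : G.Connected) (u0 : V) :
    (twinClass G u0).ncard ≤ partitionDim G := by
  obtain ⟨P, hP, hcard⟩ := exists_min_locating hG
  exact hcard ▸ tau_le_ncard hG u0 hP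

/-- lower bound τ + 1 when the twin class is a clique -/
lemma clique_lb [Fintype V] (hG : G.Connected) (u0 : V)
    (hclique : ∀ v ∈ twinClass G u0, ∀ w ∈ twinClass G u0, v ≠ w → G.Adj v w)
    (hne : ((twinClass G u0)ᶜ : Set V).Nonempty)
    {P : Set (Set V)} (hP : IsLocatingPartition G P) :
    (twinClass G u0).ncard + 1 ≤ P.ncard := by
  classical
  set W := twinClass G u0 with hWdef
  have hle : W.ncard ≤ P.ncard := tau_le_ncard hG u0 hP
  rcases Nat.lt_or_ge W.ncard P.ncard with hlt | hge
  · omega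
  have hcardeq : P.ncard = W.ncard := le_antisymm hge hle
  exfalso
  obtain ⟨pt, h1, h2, hinj⟩ := partOf_injOn hG u0 hP
  -- pt '' W = P
  have himg : pt '' W = P := by
    apply Set.eq_of_subset_of_ncard_le
    · rintro S ⟨w, hw, hptw⟩
      exact hptw ▸ (h1 w).1
    · rw [Set.ncard_image_of_injOn hinj, ← hWdef]; omega
    · exact Set.toFinite P
  -- every x outside W is nonadjacent to all of W
  have hxnadj : ∀ x ∈ (Wᶜ : Set V), ∀ w ∈ W, ¬ G.Adj x w := by
    intro x hx
    obtain ⟨w', hw', hw'eq⟩ : ∃ w' ∈ W, pt w' = pt x := by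
      have : pt x ∈ P := (h1 x).1
      rw [← himg] at this
      obtain ⟨w', hw', he⟩ := this
      exact ⟨w', hw', he⟩
    have hxw' : x ≠ w' := fun e => hx (e ▸ hw')
    have hsep : ∃ S ∈ P, setDist G x S ≠ setDist G w' S := by
      by_contra hc
      push_neg at hc
      exact hxw' (hP.2 x w' hc)
    obtain ⟨S, hS, hSne⟩ := hsep
    have hSnx : S ≠ pt x := by
      intro e
      apply hSne
      rw [e, setDist_eq_zero_of_mem (h1 x).2, ← hw'eq,
        setDist_eq_zero_of_mem (h1 w').2]
    obtain ⟨wS, hwS, hwSeq⟩ : ∃ wS ∈ W, pt wS = S := by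
      rw [← himg] at hS
      obtain ⟨wS, hwS, he⟩ := hS
      exact ⟨wS, hwS, he⟩
    have hwSS : wS ∈ S := hwSeq ▸ (h1 wS).2
    have hw'notS : w' ∉ S := by
      intro hmem
      exact hSnx ((h2 w' S hS hmem).trans hw'eq)
    have hxnotS : x ∉ S := fun hmem => hSnx (h2 x S hS hmem)
    have hw'wS : w' ≠ wS := fun e => hw'notS (e ▸ hwSS)
    have hadj : G.Adj w' wS := hclique w' hw' wS hwS hw'wS
    have hdw' : setDist G w' S = 1 := by
      have hub : setDist G w' S ≤ 1 := by
        have := setDist_le (G := G) (u := w') hwSS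
        rwa [(SimpleGraph.dist_eq_one_iff_adj).mpr hadj] at this
      have hlb := setDist_ne_zero hG ⟨wS, hwSS⟩ hw'notS
      omega
    have hdx0 := setDist_ne_zero hG ⟨wS, hwSS⟩ hxnotS
    have hdx2 : 2 ≤ setDist G x S := by
      have : setDist G x S ≠ 1 := by rw [hdw'] at hSne; exact hSne
      omega
    -- hence x is not adjacent to wS, hence to no member of W
    have hnadjS : ¬ G.Adj x wS := by
      intro hadjx
      have := setDist_le (G := G) (u := x) hwSS
      rw [(SimpleGraph.dist_eq_one_iff_adj).mpr hadjx] at this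
      omega
    intro w hw hadjw
    apply hnadjS
    by_cases hwwS : w = wS
    · exact hwwS ▸ hadjw
    · have htwin : IsTwin G w wS := isTwin_trans (isTwin_symm hw) hwS
      have hxw : x ≠ w := fun e => hx (e ▸ hw)
      have hxwS : x ≠ wS := fun e => hx (e ▸ hwS)
      exact (isTwin_adj_iff htwin hxw hxwS).mp hadjw
  -- connectivity contradiction
  obtain ⟨x0, hx0⟩ := hne
  have hu0 : u0 ∈ W := isTwin_refl u0
  obtain ⟨p⟩ := hG.preconnected u0 x0
  obtain ⟨a, b, haW, hbW, hab⟩ := walk_boundary p hu0 hx0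
  exact hxnadj b hbW a haW hab.symm

/-- Ore-type lemma: obtained from a minimal dominating set or its complement. -/
lemma exists_small_dominating [DecidableEq V] (A : Finset V) (r : V → V → Prop)
    [DecidablePred fun p : V × V => r p.1 p.2]
    (hsym : ∀ x y, r x y → r y x)
    (hirr : ∀ x y, r x y → x ≠ y)
    (hmin : ∀ x ∈ A, ∃ y ∈ A, r x y) :
    ∃ Y ⊆ A, 2 * Y.card ≤ A.card ∧ ∀ x ∈ A, x ∉ Y → ∃ y ∈ Y, r x y := by
  classical
  set dom : Finset V → Prop := fun D => ∀ x ∈ A, x ∉ D → ∃ y ∈ D, r x y with hdom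
  have hAdom : dom A := fun x hx hnx => absurd hx hnx
  set 𝒟 : Finset (Finset V) := A.powerset.filter (fun D => dom D) with h𝒟
  have hA𝒟 : A ∈ 𝒟 := by
    rw [h𝒟, Finset.mem_filter, Finset.mem_powerset]
    exact ⟨subset_rfl, hAdom⟩
  obtain ⟨D, hD𝒟, hDmin'⟩ := Finset.exists_minimal (s := 𝒟) ⟨A, hA𝒟⟩
  have hDmin : ∀ x ∈ 𝒟, ¬ x < D := fun x hx hlt => hlt.not_ge (hDmin' hx hlt.le)
  rw [h𝒟, Finset.mem_filter, Finset.mem_powerset] at hD𝒟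
  obtain ⟨hDA, hDdom⟩ := hD𝒟
  have hcomp : ∀ x ∈ D, ∃ y ∈ A \ D, r x y := by
    by_contra hc
    push_neg at hc
    obtain ⟨x0, hx0D, hx0⟩ := hc
    have hx0A : x0 ∈ A := hDA hx0D
    have hD' : dom (D.erase x0) := by
      intro x hxA hxD'
      by_cases hxx0 : x = x0
      · subst hxx0
        obtain ⟨y, hyA, hry⟩ := hmin x hxA
        have hyD : y ∈ D := by
          by_contra hyD
          exact hx0 y (Finset.mem_sdiff.mpr ⟨hyA, hyD⟩) hry
        exact ⟨y, Finset.mem_erase.mpr ⟨(hirr x y hry).symm, hyD⟩, hry⟩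
      · have hxD : x ∉ D := by
          intro hxD
          exact hxD' (Finset.mem_erase.mpr ⟨hxx0, hxD⟩)
        obtain ⟨y, hyD, hry⟩ := hDdom x hxA hxD
        have hyx0 : y ≠ x0 := by
          intro e
          exact (hx0 x (Finset.mem_sdiff.mpr ⟨hxA, hxD⟩) (e ▸ hsym x y hry)).elim
        exact ⟨y, Finset.mem_erase.mpr ⟨hyx0, hyD⟩, hry⟩
    have hmem : D.erase x0 ∈ 𝒟 := by
      rw [h𝒟, Finset.mem_filter, Finset.mem_powerset]
      exact ⟨(Finset.erase_subset x0 D).trans hDA, hD'⟩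
    exact hDmin _ hmem (Finset.erase_ssubset hx0D)
  by_cases hsize : 2 * D.card ≤ A.card
  · exact ⟨D, hDA, hsize, hDdom⟩
  · refine ⟨A \ D, Finset.sdiff_subset, ?_, ?_⟩
    · have : (A \ D).card = A.card - D.card := Finset.card_sdiff_of_subset hDA
      have hDle := Finset.card_le_card hDA
      omega
    · intro x hxA hx
      have hxD : x ∈ D := by
        by_contra hxD
        exact hx (Finset.mem_sdiff.mpr ⟨hxA, hxD⟩)
      exact hcomp x hxD

/-- Build an involution of `V` pairing up two disjoint finsets of the same size. -/
lemma exists_pairing_involution [DecidableEq V] (A B : Finset V) (hd : ∀ a ∈ A, a ∉ B)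
    (hcard : A.card = B.card) :
    ∃ σ : V → V, (∀ v, σ (σ v) = v) ∧ (∀ a ∈ A, σ a ∈ B) ∧ (∀ b ∈ B, σ b ∈ A) ∧
      (∀ v, v ∉ A → v ∉ B → σ v = v) := by
  classical
  have hcard' : Fintype.card ↥A = Fintype.card ↥B := by
    rw [Fintype.card_coe, Fintype.card_coe, hcard]
  set e := Fintype.equivOfCardEq hcard' with he
  set σ : V → V := fun v =>
    if h : v ∈ A then (e ⟨v, h⟩ : V)
    else if h' : v ∈ B then (e.symm ⟨v, h'⟩ : V)
    else v with hσ
  have hAB : ∀ a ∈ A, σ a ∈ B := by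
    intro a ha
    simp only [hσ, dif_pos ha]
    exact (e ⟨a, ha⟩).2
  have hBA : ∀ b ∈ B, σ b ∈ A := by
    intro b hb
    have hbA : b ∉ A := fun h => hd b h hb
    simp only [hσ, dif_neg hbA, dif_pos hb]
    exact (e.symm ⟨b, hb⟩).2
  have hfix : ∀ v, v ∉ A → v ∉ B → σ v = v := by
    intro v h1 h2
    simp only [hσ, dif_neg h1, dif_neg h2]
  refine ⟨σ, ?_, hAB, hBA, hfix⟩
  intro v
  by_cases h : v ∈ A
  · have h1 : σ v = (e ⟨v, h⟩ : V) := by simp only [hσ, dif_pos h]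
    have h2 : σ v ∈ B := hAB v h
    have h3 : σ v ∉ A := fun hh => hd _ hh h2
    have h4 : σ (σ v) = (e.symm ⟨σ v, h2⟩ : V) := by
      have key : ∀ w (hw : w ∉ A) (hw' : w ∈ B), σ w = (e.symm ⟨w, hw'⟩ : V) :=
        fun w hw hw' => by simp only [hσ, dif_neg hw, dif_pos hw']
      exact key _ h3 h2
    rw [h4]
    have : (⟨σ v, h2⟩ : ↥B) = e ⟨v, h⟩ := Subtype.ext h1
    rw [this, Equiv.symm_apply_apply]
  · by_cases h' : v ∈ B
    · have h1 : σ v = (e.symm ⟨v, h'⟩ : V) := by simp only [hσ, dif_neg h, dif_pos h']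
      have h2 : σ v ∈ A := hBA v h'
      have h4 : σ (σ v) = (e ⟨σ v, h2⟩ : V) := by
        have key : ∀ w (hw : w ∈ A), σ w = (e ⟨w, hw⟩ : V) :=
          fun w hw => by simp only [hσ, dif_pos hw]
        exact key _ h2
      rw [h4]
      have : (⟨σ v, h2⟩ : ↥A) = e.symm ⟨v, h'⟩ := Subtype.ext h1
      rw [this, Equiv.apply_symm_apply]
    · rw [hfix v h h', hfix v h h']

section Constructions

/-- distances from a vertex outside the twin class to members of the class agree -/
lemma dist_to_class (hG : G.Connected) (u0 : V) {x w : V}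
    (hx : x ∉ twinClass G u0) (hw : w ∈ twinClass G u0) :
    G.dist x w = G.dist x u0 := by
  have hxu0 : x ≠ u0 := fun e => hx (e ▸ isTwin_refl u0)
  have hxw : x ≠ w := fun e => hx (e ▸ hw)
  have h := dist_eq_of_twin hG (hw : IsTwin G u0 w) hxu0 hxw
  rw [SimpleGraph.dist_comm (u := x) (v := w), SimpleGraph.dist_comm (u := x) (v := u0)]
  exact h.symm

lemma adj_to_class (u0 : V) {x w : V}
    (hx : x ∉ twinClass G u0) (hw : w ∈ twinClass G u0) :
    G.Adj w x ↔ G.Adj u0 x := by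
  have hxu0 : x ≠ u0 := fun e => hx (e ▸ isTwin_refl u0)
  have hxw : x ≠ w := fun e => hx (e ▸ hw)
  constructor
  · intro h; exact ((isTwin_adj_iff (hw : IsTwin G u0 w) hxu0 hxw).mpr h.symm).symm
  · intro h; exact ((isTwin_adj_iff (hw : IsTwin G u0 w) hxu0 hxw).mp h.symm).symm

/-- construction in the independent (false-twin) case -/
lemma indep_ub [Fintype V] (hG : G.Connected) (u0 : V)
    (hindep : ∀ v ∈ twinClass G u0, ∀ w ∈ twinClass G u0, v ≠ w → ¬ G.Adj v w)
    (hbig : Fintype.card V < 2 * (twinClass G u0).ncard)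
    (hXne : ((twinClass G u0)ᶜ : Set V).Nonempty) :
    partitionDim G ≤ (twinClass G u0).ncard := by
  classical
  have hu0W : u0 ∈ twinClass G u0 := isTwin_refl u0
  set Wf : Finset V := (twinClass G u0).toFinset with hWf
  set Xf : Finset V := Wfᶜ with hXf
  have hmemW : ∀ v : V, v ∈ Wf ↔ v ∈ twinClass G u0 := fun v => Set.mem_toFinset
  have hmemX : ∀ v : V, v ∈ Xf ↔ v ∉ twinClass G u0 := by
    intro v
    rw [hXf, Finset.mem_compl, hmemW]
  have hWcard : Wf.card = (twinClass G u0).ncard := by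
    rw [hWf, Set.ncard_eq_toFinset_card']
  have hcards : Wf.card + Xf.card = Fintype.card V := by
    have h1 : Xf.card = Fintype.card V - Wf.card := by rw [hXf, Finset.card_compl]
    have h2 : Wf.card ≤ Fintype.card V := Finset.card_le_univ Wf
    omega
  have hm : Xf.card < Wf.card := by omega
  -- a vertex of the outside adjacent to the class
  obtain ⟨x0, hx0⟩ := hXne
  obtain ⟨p⟩ := hG.preconnected u0 x0
  obtain ⟨a, b0, haW, hb0W, hab0⟩ := walk_boundary p hu0W hx0
  have hb0adj : G.Adj u0 b0 := (adj_to_class u0 hb0W haW).mp hab0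
  -- distance between distinct members of W is 2
  have hdist2 : ∀ v ∈ twinClass G u0, ∀ w ∈ twinClass G u0, v ≠ w → G.dist v w = 2 := by
    intro v hv w hw hvw
    have hvb : G.Adj v b0 := (adj_to_class u0 hb0W hv).mpr hb0adj
    have hwb : G.Adj w b0 := (adj_to_class u0 hb0W hw).mpr hb0adj
    have hub : G.dist v w ≤ 2 := by
      have ht := hG.dist_triangle (u := v) (v := b0) (w := w)
      have h1 : G.dist v b0 = 1 := SimpleGraph.dist_eq_one_iff_adj.mpr hvb
      have h2 : G.dist b0 w = 1 := SimpleGraph.dist_eq_one_iff_adj.mpr hwb.symm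
      omega
    have h0 : G.dist v w ≠ 0 := Nat.pos_iff_ne_zero.mp (hG.pos_dist_of_ne hvw)
    have h1 : G.dist v w ≠ 1 := by
      intro e
      exact hindep v hv w hw hvw (SimpleGraph.dist_eq_one_iff_adj.mp e)
    omega
  -- pair up the outside with part of W
  obtain ⟨B, hBsub, hBcard⟩ := Finset.exists_subset_card_eq (s := Wf) (n := Xf.card) (le_of_lt hm)
  have hdisj : ∀ a ∈ Xf, a ∉ B := by
    intro a ha hB
    rw [hmemX] at ha
    exact ha ((hmemW a).mp (hBsub hB))
  obtain ⟨σ, hinv, hAB, hBA, hfix0⟩ := exists_pairing_involution Xf B hdisj hBcard.symm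
  have hfixW : ∀ v, σ v = v → v ∈ (↑Wf : Set V) := by
    intro v hv
    rw [Finset.mem_coe, hmemW]
    by_contra hvW
    have hvX : v ∈ Xf := (hmemX v).mpr hvW
    have : σ v ∈ B := hAB v hvX
    rw [hv] at this
    exact hdisj v hvX this
  have hswap : ∀ v, σ v ≠ v → (v ∈ (↑Wf : Set V) ↔ σ v ∉ (↑Wf : Set V)) := by
    intro v hv
    by_cases hvX : v ∈ Xf
    · have h1 : v ∉ Wf := by rw [hXf, Finset.mem_compl] at hvX; exact hvX
      have h2 : σ v ∈ Wf := hBsub (hAB v hvX)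
      simp [h1, h2]
    · have hvB : v ∈ B := by
        by_contra hvB
        exact hv (hfix0 v hvX hvB)
      have h1 : v ∈ Wf := hBsub hvB
      have h2 : σ v ∈ Xf := hBA v hvB
      have h3 : σ v ∉ Wf := by rw [hXf, Finset.mem_compl] at h2; exact h2
      simp [h1, h3]
  have hwit : ∀ r ∈ (↑Wf : Set V), σ r ≠ r →
      ∃ z ∈ (↑Wf : Set V), min (G.dist r z) (G.dist r (σ z)) ≠
        min (G.dist (σ r) z) (G.dist (σ r) (σ z)) := by
    intro r hr hmoved
    have hrW : r ∈ Wf := Finset.mem_coe.mp hr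
    have hrB : r ∈ B := by
      by_contra hrB
      have hrX : r ∉ Xf := by rw [hXf, Finset.mem_compl]; exact fun h => h hrW
      exact hmoved (hfix0 r hrX hrB)
    set x := σ r with hx
    have hxX : x ∈ Xf := hBA r hrB
    have hxW : x ∉ twinClass G u0 := (hmemX x).mp hxX
    have hxu0 : x ≠ u0 := fun e => hxW (e ▸ hu0W)
    have hdx : ∀ w ∈ Wf, G.dist x w = G.dist x u0 :=
      fun w hw => dist_to_class hG u0 hxW ((hmemW w).mp hw)
    have hd0 : G.dist x u0 ≠ 0 := Nat.pos_iff_ne_zero.mp (hG.pos_dist_of_ne hxu0)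
    by_cases hd2 : G.dist x u0 = 2
    · -- need a witness pair
      have hex : ∃ x' ∈ Xf, x' ≠ x ∧ ¬ (G.Adj x x' ↔ G.dist x' u0 = 1) := by
        by_contra hc
        push_neg at hc
        apply hxW
        show IsTwin G u0 x
        rw [isTwin_iff]
        intro y hyu0 hyx
        by_cases hyW : y ∈ twinClass G u0
        · have hn1 : ¬ G.Adj u0 y := hindep u0 hu0W y hyW (fun e => hyu0 e.symm)
          have hn2 : ¬ G.Adj x y := by
            intro hadj
            have := hdx y ((hmemW y).mpr hyW)
            rw [SimpleGraph.dist_eq_one_iff_adj.mpr hadj] at this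
            omega
          exact iff_of_false hn1 hn2
        · have hyX : y ∈ Xf := (hmemX y).mpr hyW
          have hiff := hc y hyX hyx
          have h2 : G.Adj u0 y ↔ G.dist y u0 = 1 := by
            rw [SimpleGraph.dist_comm, SimpleGraph.dist_eq_one_iff_adj]
          rw [h2, hiff]
      obtain ⟨x', hx'X, hx'ne, hx'⟩ := hex
      refine ⟨σ x', ?_, ?_⟩
      · exact Finset.mem_coe.mpr (hBsub (hAB x' hx'X))
      · have hzW : σ x' ∈ Wf := hBsub (hAB x' hx'X)
        have hzσ : σ (σ x') = x' := hinv x'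
        rw [hzσ]
        have hzr : σ x' ≠ r := by
          intro e
          apply hx'ne
          have := congrArg σ e
          rw [hinv] at this
          exact this
        have h1 : G.dist r (σ x') = 2 :=
          hdist2 r ((hmemW r).mp hrW) (σ x') ((hmemW (σ x')).mp hzW) (fun e => hzr e.symm)
        have h2 : G.dist x (σ x') = 2 := by rw [hdx (σ x') hzW]; exact hd2
        have h3 : G.dist r x' = G.dist x' u0 := by
          rw [SimpleGraph.dist_comm]
          exact dist_to_class hG u0 ((hmemX x').mp hx'X) ((hmemW r).mp hrW)
        rw [h1, h2, h3]
        have hx'u0 : x' ≠ u0 := fun e => ((hmemX x').mp hx'X) (e ▸ hu0W)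
        have hx'd0 : G.dist x' u0 ≠ 0 := Nat.pos_iff_ne_zero.mp (hG.pos_dist_of_ne hx'u0)
        by_cases hadj : G.Adj x x'
        · have ha1 : G.dist x' u0 ≠ 1 := fun e => hx' (iff_of_true hadj e)
          have hxx' : G.dist x x' = 1 := SimpleGraph.dist_eq_one_iff_adj.mpr hadj
          rw [hxx']
          omega
        · have ha1 : G.dist x' u0 = 1 := by
            by_contra hne1
            exact hx' (iff_of_false hadj hne1)
          have hxx' : G.dist x x' ≠ 1 := fun e =>
            hadj (SimpleGraph.dist_eq_one_iff_adj.mp e)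
          have hxx'0 : G.dist x x' ≠ 0 :=
            Nat.pos_iff_ne_zero.mp (hG.pos_dist_of_ne (fun e => hx'ne e.symm))
          rw [ha1]
          omega
    · -- solo witness in W \ B
      have hWBne : (Wf \ B).Nonempty := by
        rw [← Finset.card_pos, Finset.card_sdiff_of_subset hBsub]
        omega
      obtain ⟨z, hz⟩ := hWBne
      rw [Finset.mem_sdiff] at hz
      have hzfix : σ z = z := by
        apply hfix0
        · rw [hXf, Finset.mem_compl]; exact fun h => h hz.1
        · exact hz.2
      refine ⟨z, Finset.mem_coe.mpr hz.1, ?_⟩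
      rw [hzfix]
      simp only [min_self]
      have hzr : z ≠ r := fun e => hz.2 (e ▸ hrB)
      have h1 : G.dist r z = 2 :=
        hdist2 r ((hmemW r).mp hrW) z ((hmemW z).mp hz.1) (fun e => hzr e.symm)
      have h2 : G.dist x z = G.dist x u0 := hdx z hz.1
      rw [h1, h2]
      omega
  have := partitionDim_le_of_pairing hG σ hinv (↑Wf) hfixW hswap hwit
  rwa [Set.ncard_coe_finset, hWcard] at this

/-- construction in the clique (true-twin) case -/
lemma clique_ub [Fintype V] (hG : G.Connected) (u0 : V)
    (hclique : ∀ v ∈ twinClass G u0, ∀ w ∈ twinClass G u0, v ≠ w → G.Adj v w)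
    (hbig : Fintype.card V < 2 * (twinClass G u0).ncard)
    (hXne : ((twinClass G u0)ᶜ : Set V).Nonempty) :
    2 * partitionDim G ≤ Fintype.card V + (twinClass G u0).ncard := by
  classical
  have hu0W : u0 ∈ twinClass G u0 := isTwin_refl u0
  set Wf : Finset V := (twinClass G u0).toFinset with hWf
  set Xf : Finset V := Wfᶜ with hXf
  have hmemW : ∀ v : V, v ∈ Wf ↔ v ∈ twinClass G u0 := fun v => Set.mem_toFinset
  have hmemX : ∀ v : V, v ∈ Xf ↔ v ∉ twinClass G u0 := by
    intro v
    rw [hXf, Finset.mem_compl, hmemW]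
  have hWcard : Wf.card = (twinClass G u0).ncard := by
    rw [hWf, Set.ncard_eq_toFinset_card']
  have hcards : Wf.card + Xf.card = Fintype.card V := by
    have h1 : Xf.card = Fintype.card V - Wf.card := by rw [hXf, Finset.card_compl]
    have h2 : Wf.card ≤ Fintype.card V := Finset.card_le_univ Wf
    omega
  have hm : Xf.card < Wf.card := by omega
  have hdistWW : ∀ v ∈ Wf, ∀ w ∈ Wf, v ≠ w → G.dist v w = 1 := by
    intro v hv w hw hvw
    exact SimpleGraph.dist_eq_one_iff_adj.mpr
      (hclique v ((hmemW v).mp hv) w ((hmemW w).mp hw) hvw)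
  -- the outside, split into neighbours and non-neighbours of the class
  set X1f : Finset V := Xf.filter (fun x => G.Adj u0 x) with hX1f
  set X2f : Finset V := Xf.filter (fun x => ¬ G.Adj u0 x) with hX2f
  have hmemX1 : ∀ v : V, v ∈ X1f ↔ (v ∈ Xf ∧ G.Adj u0 v) := by
    intro v; rw [hX1f, Finset.mem_filter]
  have hmemX2 : ∀ v : V, v ∈ X2f ↔ (v ∈ Xf ∧ ¬ G.Adj u0 v) := by
    intro v; rw [hX2f, Finset.mem_filter]
  have hX12 : X1f.card + X2f.card = Xf.card := by
    rw [hX1f, hX2f]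
    exact Finset.card_filter_add_card_filter_not _
  have hX1d : ∀ x ∈ X1f, G.dist x u0 = 1 := by
    intro x hx
    rw [hmemX1] at hx
    rw [SimpleGraph.dist_comm]
    exact SimpleGraph.dist_eq_one_iff_adj.mpr hx.2
  have hX2d : ∀ x ∈ X2f, 2 ≤ G.dist x u0 := by
    intro x hx
    rw [hmemX2] at hx
    have hxu0 : x ≠ u0 := fun e => ((hmemX x).mp hx.1) (e ▸ hu0W)
    have h0 : G.dist x u0 ≠ 0 := Nat.pos_iff_ne_zero.mp (hG.pos_dist_of_ne hxu0)
    have h1 : G.dist x u0 ≠ 1 := by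
      intro e
      exact hx.2 (SimpleGraph.dist_eq_one_iff_adj.mp e).symm
    omega
  -- vertices of X1 adjacent to everything else in X1
  set If : Finset V := X1f.filter (fun x => ∀ y ∈ X1f, y ≠ x → G.Adj x y) with hIf
  have hmemIf : ∀ v : V, v ∈ If ↔ (v ∈ X1f ∧ ∀ y ∈ X1f, y ≠ v → G.Adj v y) := by
    intro v; rw [hIf, Finset.mem_filter]
  have hIfsub : If ⊆ X1f := by
    intro v hv; exact ((hmemIf v).mp hv).1
  set A'f : Finset V := X1f \ If with hA'f
  -- dominating set for the non-adjacency relation on A'f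
  obtain ⟨Y, hYsub, hYcard, hYdom⟩ :=
    exists_small_dominating A'f (fun a b => a ≠ b ∧ ¬ G.Adj a b)
      (fun a b ⟨h1, h2⟩ => ⟨h1.symm, fun h => h2 h.symm⟩)
      (fun a b h => h.1)
      (by
        intro x hx
        rw [hA'f, Finset.mem_sdiff] at hx
        obtain ⟨hx1, hx2⟩ := hx
        have hnall : ¬ ∀ y ∈ X1f, y ≠ x → G.Adj x y := by
          intro hc
          exact hx2 ((hmemIf x).mpr ⟨hx1, hc⟩)
        push_neg at hnall
        obtain ⟨y, hy1, hy2, hy3⟩ := hnall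
        refine ⟨y, ?_, hy2.symm, hy3⟩
        rw [hA'f, Finset.mem_sdiff]
        refine ⟨hy1, ?_⟩
        intro hyI
        exact hy3 (((hmemIf y).mp hyI).2 x hx1 (fun e => hy2 e.symm)).symm)
  -- each "isolated" vertex of X1 has a neighbour in X2
  have hIfnb : ∀ x ∈ If, ∃ z ∈ X2f, G.Adj x z := by
    intro x hxI
    obtain ⟨hxX1, hxall⟩ := (hmemIf x).mp hxI
    have hxX : x ∈ Xf := ((hmemX1 x).mp hxX1).1
    have hxW : x ∉ twinClass G u0 := (hmemX x).mp hxX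
    have hxadj : G.Adj u0 x := ((hmemX1 x).mp hxX1).2
    by_contra hc
    push_neg at hc
    apply hxW
    show IsTwin G u0 x
    rw [isTwin_iff]
    intro y hyu0 hyx
    by_cases hyW : y ∈ twinClass G u0
    · have h1 : G.Adj u0 y := hclique u0 hu0W y hyW (fun e => hyu0 e.symm)
      have h2 : G.Adj x y := ((adj_to_class u0 hxW hyW).mpr hxadj).symm
      exact iff_of_true h1 h2
    · have hyX : y ∈ Xf := (hmemX y).mpr hyW
      by_cases hyadj : G.Adj u0 y
      · have hyX1 : y ∈ X1f := (hmemX1 y).mpr ⟨hyX, hyadj⟩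
        exact iff_of_true hyadj (hxall y hyX1 hyx)
      · have hyX2 : y ∈ X2f := (hmemX2 y).mpr ⟨hyX, hyadj⟩
        exact iff_of_false hyadj (hc y hyX2)
  set Z2 : Finset V := If.attach.image (fun xa => (hIfnb xa.1 xa.2).choose) with hZ2
  have hZ2card : Z2.card ≤ If.card := by
    rw [hZ2]
    exact (Finset.card_image_le).trans (by rw [Finset.card_attach])
  have hZ2sub : Z2 ⊆ X2f := by
    intro z hz
    rw [hZ2, Finset.mem_image] at hz
    obtain ⟨xa, -, he⟩ := hz
    exact he ▸ ((hIfnb xa.1 xa.2).choose_spec).1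
  have hZ2adj : ∀ x ∈ If, ∃ z ∈ Z2, G.Adj x z := by
    intro x hx
    refine ⟨(hIfnb x hx).choose, ?_, ((hIfnb x hx).choose_spec).2⟩
    rw [hZ2, Finset.mem_image]
    exact ⟨⟨x, hx⟩, Finset.mem_attach _ _, rfl⟩
  set Zf : Finset V := Y ∪ Z2 with hZf
  have hZfsub : Zf ⊆ Xf := by
    rw [hZf]
    apply Finset.union_subset
    · refine hYsub.trans (Finset.Subset.trans Finset.sdiff_subset ?_)
      intro v hv; exact ((hmemX1 v).mp hv).1
    · refine hZ2sub.trans ?_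
      intro v hv; exact ((hmemX2 v).mp hv).1
  set Af : Finset V := Xf \ Zf with hAf
  have hAfcard : Af.card + Zf.card = Xf.card := by
    rw [hAf, Finset.card_sdiff_of_subset hZfsub]
    have := Finset.card_le_card hZfsub
    omega
  have hAfX : Af ⊆ Xf := Finset.sdiff_subset
  obtain ⟨B, hBsub, hBcard⟩ := Finset.exists_subset_card_eq (s := Wf) (n := Af.card)
    (by omega)
  have hdisjAB : ∀ a ∈ Af, a ∉ B := by
    intro a ha hB
    exact ((hmemX a).mp (hAfX ha)) ((hmemW a).mp (hBsub hB))
  obtain ⟨σ, hinv, hAB, hBA, hfix0⟩ := exists_pairing_involution Af B hdisjAB hBcard.symm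
  set R : Finset V := Wf ∪ Zf with hR
  have hZfB : ∀ z ∈ Zf, σ z = z := by
    intro z hz
    apply hfix0
    · rw [hAf, Finset.mem_sdiff]
      rintro ⟨-, h⟩
      exact h hz
    · intro hB
      exact ((hmemX z).mp (hZfsub hz)) ((hmemW z).mp (hBsub hB))
  have hfixR : ∀ v, σ v = v → v ∈ (↑R : Set V) := by
    intro v hv
    rw [Finset.mem_coe, hR, Finset.mem_union]
    by_contra hvR
    push_neg at hvR
    have hvA : v ∈ Af := by
      rw [hAf, Finset.mem_sdiff]
      refine ⟨?_, hvR.2⟩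
      rw [hXf, Finset.mem_compl]
      exact hvR.1
    have : σ v ∈ B := hAB v hvA
    rw [hv] at this
    exact hdisjAB v hvA this
  have hswapR : ∀ v, σ v ≠ v → (v ∈ (↑R : Set V) ↔ σ v ∉ (↑R : Set V)) := by
    intro v hv
    have hvcase : v ∈ Af ∨ v ∈ B := by
      by_contra hc
      push_neg at hc
      exact hv (hfix0 v hc.1 hc.2)
    simp only [Finset.mem_coe, hR, Finset.mem_union]
    rcases hvcase with hvA | hvB
    · have h1 : v ∉ Wf := by
        have := (hmemX v).mp (hAfX hvA)
        rw [hmemW]; exact this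
      have h2 : v ∉ Zf := by
        rw [hAf, Finset.mem_sdiff] at hvA
        exact hvA.2
      have h3 : σ v ∈ Wf := hBsub (hAB v hvA)
      simp [h1, h2, h3]
    · have h1 : v ∈ Wf := hBsub hvB
      have h2 : σ v ∈ Af := hBA v hvB
      have h3 : σ v ∉ Wf := by
        have := (hmemX (σ v)).mp (hAfX h2)
        rw [hmemW]; exact this
      have h4 : σ v ∉ Zf := by
        rw [hAf, Finset.mem_sdiff] at h2
        exact h2.2
      simp [h1, h3, h4]
  have hwitR : ∀ r ∈ (↑R : Set V), σ r ≠ r →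
      ∃ z ∈ (↑R : Set V), min (G.dist r z) (G.dist r (σ z)) ≠
        min (G.dist (σ r) z) (G.dist (σ r) (σ z)) := by
    intro r hr hmoved
    have hrR : r ∈ R := Finset.mem_coe.mp hr
    have hrB : r ∈ B := by
      rcases (by
        by_contra hc
        push_neg at hc
        exact hmoved (hfix0 r hc.1 hc.2) : r ∈ Af ∨ r ∈ B) with hA | hB
      · exfalso
        rw [hR, Finset.mem_union] at hrR
        rcases hrR with h | h
        · exact ((hmemX r).mp (hAfX hA)) ((hmemW r).mp h)
        · rw [hAf, Finset.mem_sdiff] at hA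
          exact hA.2 h
      · exact hB
    have hrW : r ∈ Wf := hBsub hrB
    set x := σ r with hx
    have hxA : x ∈ Af := hBA r hrB
    have hxX : x ∈ Xf := hAfX hxA
    have hxW : x ∉ twinClass G u0 := (hmemX x).mp hxX
    have hdx : ∀ w ∈ Wf, G.dist x w = G.dist x u0 :=
      fun w hw => dist_to_class hG u0 hxW ((hmemW w).mp hw)
    by_cases hx1 : x ∈ X1f
    · by_cases hxI : x ∈ If
      · -- witness: an X2-neighbour of x
        obtain ⟨z, hzZ2, hzadj⟩ := hZ2adj x hxI
        have hzZf : z ∈ Zf := by rw [hZf, Finset.mem_union]; exact Or.inr hzZ2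
        have hzfix : σ z = z := hZfB z hzZf
        refine ⟨z, ?_, ?_⟩
        · rw [Finset.mem_coe, hR, Finset.mem_union]; exact Or.inr hzZf
        · rw [hzfix]
          simp only [min_self]
          have hzX2 : z ∈ X2f := hZ2sub hzZ2
          have hzX : z ∈ Xf := ((hmemX2 z).mp hzX2).1
          have hzW : z ∉ twinClass G u0 := (hmemX z).mp hzX
          have h1 : G.dist r z = G.dist z u0 := by
            rw [SimpleGraph.dist_comm (u := r) (v := z)]
            exact dist_to_class hG u0 hzW ((hmemW r).mp hrW)
          have h2 : G.dist z u0 = 2 := by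
            have hub : G.dist z u0 ≤ 2 := by
              have ht := hG.dist_triangle (u := z) (v := x) (w := u0)
              have e1 : G.dist z x = 1 := SimpleGraph.dist_eq_one_iff_adj.mpr hzadj.symm
              have e2 : G.dist x u0 = 1 := hX1d x hx1
              omega
            have hlb := hX2d z hzX2
            omega
          have h3 : G.dist x z = 1 := SimpleGraph.dist_eq_one_iff_adj.mpr hzadj
          rw [h1, h2, h3]
          omega
      · -- witness: a non-neighbour of x in Y
        have hxA' : x ∈ A'f := by
          rw [hA'f, Finset.mem_sdiff]
          exact ⟨hx1, hxI⟩
        have hxY : x ∉ Y := by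
          intro hxY
          rw [hAf, Finset.mem_sdiff] at hxA
          exact hxA.2 (by rw [hZf, Finset.mem_union]; exact Or.inl hxY)
        obtain ⟨y, hyY, hyne, hynadj⟩ := hYdom x hxA' hxY
        have hyZf : y ∈ Zf := by rw [hZf, Finset.mem_union]; exact Or.inl hyY
        have hyfix : σ y = y := hZfB y hyZf
        refine ⟨y, ?_, ?_⟩
        · rw [Finset.mem_coe, hR, Finset.mem_union]; exact Or.inr hyZf
        · rw [hyfix]
          simp only [min_self]
          have hyX1 : y ∈ X1f := by
            have h := hYsub hyY
            rw [hA'f, Finset.mem_sdiff] at h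
            exact h.1
          have hyX : y ∈ Xf := ((hmemX1 y).mp hyX1).1
          have hyW : y ∉ twinClass G u0 := (hmemX y).mp hyX
          have h1 : G.dist r y = G.dist y u0 := by
            rw [SimpleGraph.dist_comm (u := r) (v := y)]
            exact dist_to_class hG u0 hyW ((hmemW r).mp hrW)
          have h2 : G.dist y u0 = 1 := hX1d y hyX1
          have h3 : G.dist x y = 2 := by
            have hub : G.dist x y ≤ 2 := by
              have ht := hG.dist_triangle (u := x) (v := u0) (w := y)
              have e1 : G.dist x u0 = 1 := hX1d x hx1
              have e2 : G.dist u0 y = 1 := by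
                rw [SimpleGraph.dist_comm]
                exact hX1d y hyX1
              omega
            have h0 : G.dist x y ≠ 0 :=
              Nat.pos_iff_ne_zero.mp (hG.pos_dist_of_ne hyne)
            have hne1 : G.dist x y ≠ 1 := fun e =>
              hynadj (SimpleGraph.dist_eq_one_iff_adj.mp e)
            omega
          rw [h1, h2, h3]
          omega
    · -- x in X2 : witness is a free vertex of W
      have hxX2 : x ∈ X2f := by
        rw [hmemX2]
        refine ⟨hxX, fun h => hx1 ((hmemX1 x).mpr ⟨hxX, h⟩)⟩
      have hWBne : (Wf \ B).Nonempty := by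
        rw [← Finset.card_pos, Finset.card_sdiff_of_subset hBsub]
        omega
      obtain ⟨z, hz⟩ := hWBne
      rw [Finset.mem_sdiff] at hz
      have hzfix : σ z = z := by
        apply hfix0
        · rw [hAf, Finset.mem_sdiff]
          rintro ⟨hzX, -⟩
          rw [hXf, Finset.mem_compl] at hzX
          exact hzX hz.1
        · exact hz.2
      refine ⟨z, ?_, ?_⟩
      · rw [Finset.mem_coe, hR, Finset.mem_union]; exact Or.inl hz.1
      · rw [hzfix]
        simp only [min_self]
        have hzr : z ≠ r := fun e => hz.2 (e ▸ hrB)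
        have h1 : G.dist r z = 1 := hdistWW r hrW z hz.1 (fun e => hzr e.symm)
        have h2 : G.dist x z = G.dist x u0 := hdx z hz.1
        have h3 := hX2d x hxX2
        omega
  have hfinal := partitionDim_le_of_pairing hG σ hinv (↑R) hfixR hswapR hwitR
  rw [Set.ncard_coe_finset] at hfinal
  have hRcard : R.card ≤ Wf.card + Zf.card := by
    rw [hR]
    exact Finset.card_union_le _ _
  -- size of Z
  have hZfcard : Zf.card ≤ Y.card + Z2.card := by
    rw [hZf]
    exact Finset.card_union_le _ _
  have hA'card : A'f.card + If.card = X1f.card := by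
    rw [hA'f, Finset.card_sdiff_of_subset hIfsub]
    have := Finset.card_le_card hIfsub
    omega
  have hZ2q : Z2.card ≤ X2f.card := Finset.card_le_card hZ2sub
  omega

end Constructions

lemma twinClass_adj_all {u0 v w : V} (hv : v ∈ twinClass G u0) (hw : w ∈ twinClass G u0)
    (hvw : v ≠ w) (hadj : G.Adj v w) :
    ∀ a ∈ twinClass G u0, ∀ b ∈ twinClass G u0, a ≠ b → G.Adj a b := by
  have hclaim : ∀ c ∈ twinClass G u0, c ≠ v → G.Adj v c := by
    intro c hc hcv
    by_cases hcw : c = w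
    · exact hcw ▸ hadj
    · have htwin : IsTwin G w c := isTwin_trans (isTwin_symm hw) hc
      exact (isTwin_adj_iff htwin hvw (fun e => hcv e.symm)).mp hadj
  intro a ha b hb hab
  by_cases hav : a = v
  · subst hav
    exact hclaim b hb (fun e => hab e.symm)
  · by_cases hbv : b = v
    · subst hbv
      exact (hclaim a ha hav).symm
    · have htwin : IsTwin G v a := isTwin_trans (isTwin_symm hv) ha
      have h1 := isTwin_adj_iff htwin hbv (fun e => hab e.symm)
      exact (h1.mp (hclaim b hb hbv).symm).symm

end Aux

/-- For a connected graph `G` of order `n ≥ 2`, not complete, with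
`β_p(G) = n - h` and `2·τ(G) > n`, with `W` its twin class of maximum
cardinality: `n - 2h ≤ τ(G) ≤ n - h - 1` iff `W` induces a complete subgraph. -/
theorem twinNumber_range_iff_clique {V : Type*} [Fintype V]
    (G : SimpleGraph V) (hG : G.Connected) (n : ℕ) (hn : Fintype.card V = n)
    (h2 : 2 ≤ n)
    (hnotcomplete : ¬ Nonempty (G ≃g (⊤ : SimpleGraph V)))
    (h : ℕ) (hβ : partitionDim G = n - h)
    (hτ : n < 2 * twinNumber G)
    (W : Set V) (hW : ∃ u : V, W = twinClass G u)
    (hWcard : W.ncard = twinNumber G) :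
    (n - 2 * h ≤ twinNumber G ∧ twinNumber G ≤ n - h - 1) ↔
      (∀ u ∈ W, ∀ v ∈ W, u ≠ v → G.Adj u v) := by
  classical
  subst hn
  obtain ⟨u0, rfl⟩ := hW
  have hu0W : u0 ∈ twinClass G u0 := Aux.isTwin_refl u0
  have hbig : Fintype.card V < 2 * (twinClass G u0).ncard := by rw [hWcard]; exact hτ
  -- the complement of the twin class is nonempty
  have hXne : ((twinClass G u0)ᶜ : Set V).Nonempty := by
    rw [Set.nonempty_compl]
    intro hWuniv
    have hall : ∀ a b : V, a ≠ b → G.Adj a b := by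
      have hmem : ∀ a : V, a ∈ twinClass G u0 := by
        intro a
        rw [hWuniv]
        exact Set.mem_univ a
      obtain ⟨v, w, hvw⟩ := Fintype.exists_pair_of_one_lt_card (α := V) (by omega)
      obtain ⟨p⟩ := hG.preconnected v w
      have hedge : ∃ a b : V, G.Adj a b := by
        cases p with
        | nil => exact absurd rfl hvw
        | cons ha q => exact ⟨_, _, ha⟩
      obtain ⟨a0, b0, hab0⟩ := hedge
      exact fun a b hab =>
        Aux.twinClass_adj_all (hmem a0) (hmem b0) (G.ne_of_adj hab0) hab0 a (hmem a)
          b (hmem b) hab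
    apply hnotcomplete
    have hGtop : G = (⊤ : SimpleGraph V) := by
      ext a b
      simp only [SimpleGraph.top_adj]
      exact ⟨fun hab => G.ne_of_adj hab, fun hab => hall a b hab⟩
    rw [hGtop]
    exact ⟨RelIso.refl _⟩
  have hβτ : twinNumber G ≤ partitionDim G := by
    have := Aux.tau_le_partitionDim hG u0
    rwa [hWcard] at this
  have hτ2 : 2 ≤ twinNumber G := by omega
  have hsum : partitionDim G + h = Fintype.card V := by omega
  constructor
  · rintro ⟨hlb, hub⟩
    by_contra hnc
    push_neg at hnc
    obtain ⟨a, ha, b, hb, hab, hnadj⟩ := hnc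
    have hindep : ∀ v ∈ twinClass G u0, ∀ w ∈ twinClass G u0, v ≠ w → ¬ G.Adj v w := by
      intro v hv w hw hvw hadj
      exact hnadj (Aux.twinClass_adj_all hv hw hvw hadj a ha b hb hab)
    have hβle : partitionDim G ≤ twinNumber G := by
      have := Aux.indep_ub hG u0 hindep hbig hXne
      rwa [hWcard] at this
    omega
  · intro hclique
    have hlb : twinNumber G + 1 ≤ partitionDim G := by
      obtain ⟨P, hP, hPcard⟩ := Aux.exists_min_locating hG
      have := Aux.clique_lb hG u0 hclique hXne hP
      rw [hWcard] at this
      omega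
    have hub2 : 2 * partitionDim G ≤ Fintype.card V + twinNumber G := by
      have := Aux.clique_ub hG u0 hclique hbig hXne
      rwa [hWcard] at this
    constructor
    · omega
    · omega
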